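/- Let G be a compact abelian group, S ⊆ Ĝ a subsemigroup containing the trivial character, and A the invariant algebra spanned by S. If S ∩ (−S) = {0} (only the trivial character has its inverse in S), then A is antisymmetric: every real-valued function in A is constant. Conversely, if S ∩ (−S) ≠ {0}, then A contains a nonconstant real-valued function. -/

import Mathlib

open MeasureTheory Complex

set_option maxHeartbeats 1000000 in
/-- Let `G` be a compact abelian group, `S` a semigroup of continuous characters of `G`
containing the trivial character, and `A` the invariant algebra spanned by `S`.  If only the
trivial character of `S` has its inverse (= conjugate `star χ`) in `S`, then `A` is
antisymmetric: every real-valued function in `A` is constant.  Conversely, if some nontrivial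
character of `S` has its inverse in `S`, then `A` contains a nonconstant real-valued function. -/
theorem stmt_5 {G : Type*} [CommGroup G] [TopologicalSpace G] [IsTopologicalGroup G]
    [CompactSpace G] [T2Space G]
    (S : Set C(G, ℂ))
    (hchar : ∀ χ ∈ S, (∀ x : G, ‖χ x‖ = 1) ∧ ∀ x y : G, χ (x * y) = χ x * χ y)
    (hone : (1 : C(G, ℂ)) ∈ S)
    (hmulS : ∀ χ ∈ S, ∀ ψ ∈ S, χ * ψ ∈ S) :
    let A := closure ((Submodule.span ℂ S : Submodule ℂ C(G, ℂ)) : Set C(G, ℂ))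
    ((∀ χ ∈ S, star χ ∈ S → χ = 1) →
        ∀ f ∈ A, (∀ x : G, (f x).im = 0) → ∀ x y : G, f x = f y) ∧
    ((∃ χ ∈ S, χ ≠ 1 ∧ star χ ∈ S) →
        ∃ f ∈ A, (∀ x : G, (f x).im = 0) ∧ ∃ x y : G, f x ≠ f y) := by
  intro A
  constructor
  · -- forward direction
    intro hS f hfA hfim
    borelize G
    let μ : Measure G := Measure.haar
    haveI : IsFiniteMeasure μ := CompactSpace.isFiniteMeasure
    have hint0 : ∀ (u : G → ℝ), Continuous u → Integrable u μ := fun u hu =>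
      hu.integrable_of_hasCompactSupport (HasCompactSupport.of_compactSpace _)
    have hint : ∀ (u : G → ℂ), Continuous u → Integrable u μ := fun u hu =>
      hu.integrable_of_hasCompactSupport (HasCompactSupport.of_compactSpace _)
    have hint2 : ∀ (u v : G → ℂ), Continuous u → Continuous v →
        Integrable (fun x => u x * v x) μ := fun u v hu hv => hint _ (hu.mul hv)
    have hconj : ∀ g : C(G, ℂ), Continuous fun x => (starRingEnd ℂ) (g x) :=
      fun g => Complex.continuous_conj.comp (map_continuous g)
    -- the integral of a nontrivial character vanishes
    have hvanish : ∀ χ ∈ S, χ ≠ 1 → ∫ x, χ x ∂μ = 0 := by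
      intro χ hχ hne
      obtain ⟨a, ha⟩ : ∃ a : G, χ a ≠ 1 := by
        by_contra hc
        push_neg at hc
        exact hne (ContinuousMap.ext fun x => by simpa using hc x)
      have h1 := integral_mul_left_eq_self (μ := μ) (fun x => χ x) a
      have h2 : ∫ x, χ (a * x) ∂μ = χ a * ∫ x, χ x ∂μ := by
        simp_rw [(hchar χ hχ).2 a]
        exact integral_const_mul _ _
      rw [h2] at h1
      have h3 : (χ a - 1) * ∫ x, χ x ∂μ = 0 := by
        rw [sub_mul, one_mul, h1, sub_self]
      exact (mul_eq_zero.1 h3).resolve_left (sub_ne_zero.2 ha)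
    have hvanish' : ∀ χ ∈ S, χ ≠ 1 → ∫ x, (starRingEnd ℂ) (χ x) ∂μ = 0 := by
      intro χ hχ hne
      rw [integral_conj, hvanish χ hχ hne, map_zero]
    -- continuity of the pairing with a fixed w
    have hcont : ∀ w : C(G, ℂ), Continuous fun g : C(G, ℂ) => ∫ x, g x * w x ∂μ := by
      intro w
      refine (LipschitzWith.of_dist_le_mul
        (K := ‖w‖₊ * (μ Set.univ).toNNReal) ?_).continuous
      intro g g'
      have Igw := hint2 _ _ (map_continuous g) (map_continuous w)
      have Ig'w := hint2 _ _ (map_continuous g') (map_continuous w)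
      rw [dist_eq_norm, ← integral_sub Igw Ig'w]
      have hb : ∀ x, ‖g x * w x - g' x * w x‖ ≤ ‖g - g'‖ * ‖w‖ := by
        intro x
        rw [← sub_mul, norm_mul]
        have h1 : ‖g x - g' x‖ ≤ ‖g - g'‖ := by
          simpa using ContinuousMap.norm_coe_le_norm (g - g') x
        exact mul_le_mul h1 (ContinuousMap.norm_coe_le_norm w x) (norm_nonneg _)
          (norm_nonneg _)
      calc ‖∫ x, (g x * w x - g' x * w x) ∂μ‖
          ≤ (‖g - g'‖ * ‖w‖) * (μ Set.univ).toReal :=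
            norm_integral_le_of_norm_le_const (Filter.Eventually.of_forall hb)
        _ = ↑(‖w‖₊ * (μ Set.univ).toNNReal) * dist g g' := by
            rw [dist_eq_norm]
            push_cast
            ring
    -- orthogonality of f to nontrivial characters
    have horto : ∀ χ ∈ S, χ ≠ 1 → ∫ x, f x * χ x ∂μ = 0 := by
      intro χ hχ hne
      have hsub : ((Submodule.span ℂ S : Submodule ℂ C(G, ℂ)) : Set C(G, ℂ)) ⊆
          {g : C(G, ℂ) | ∫ x, g x * χ x ∂μ = 0} := by
        intro g hg
        induction hg using Submodule.span_induction with
        | mem ψ hψ =>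
          have hmul := hmulS ψ hψ χ hχ
          have hne2 : ψ * χ ≠ 1 := by
            intro hpc
            apply hne
            apply hS χ hχ
            have hx : ∀ x, ψ x * χ x = 1 := fun x => by
              have := congrArg (fun g : C(G, ℂ) => g x) hpc; simpa using this
            have hstar : star χ = ψ := by
              ext x
              have hc1 : χ x * (starRingEnd ℂ) (χ x) = 1 := by
                rw [Complex.mul_conj]
                norm_cast
                have : ‖χ x‖ = 1 := by
                  exact (hchar χ hχ).1 x
                rw [Complex.normSq_eq_norm_sq, this]; norm_num
              have : ψ x = (starRingEnd ℂ) (χ x) := by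
                calc ψ x = ψ x * (χ x * (starRingEnd ℂ) (χ x)) := by rw [hc1, mul_one]
                  _ = (ψ x * χ x) * (starRingEnd ℂ) (χ x) := by ring
                  _ = (starRingEnd ℂ) (χ x) := by rw [hx x, one_mul]
              simp [this]
            rw [hstar]; exact hψ
          have hv := hvanish (ψ * χ) hmul hne2
          show ∫ x, ψ x * χ x ∂μ = 0
          have e : ∀ x, ψ x * χ x = (ψ * χ) x := fun x => rfl
          simp_rw [e]
          exact hv
        | zero =>
          show ∫ x, (0 : C(G, ℂ)) x * χ x ∂μ = 0
          simp
        | add g g' hg hg' ihg ihg' =>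
          have Ig := hint2 _ _ (map_continuous g) (map_continuous χ)
          have Ig' := hint2 _ _ (map_continuous g') (map_continuous χ)
          have ih1 : ∫ x, g x * χ x ∂μ = 0 := ihg
          have ih2 : ∫ x, g' x * χ x ∂μ = 0 := ihg'
          show ∫ x, (g + g') x * χ x ∂μ = 0
          have e : ∀ x, (g + g') x * χ x = g x * χ x + g' x * χ x := fun x => by
            rw [ContinuousMap.add_apply, add_mul]
          simp_rw [e]
          rw [integral_add Ig Ig', ih1, ih2, add_zero]
        | smul a g hg ih =>
          have ih1 : ∫ x, g x * χ x ∂μ = 0 := ih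
          show ∫ x, (a • g) x * χ x ∂μ = 0
          have e : ∀ x, (a • g) x * χ x = a * (g x * χ x) := fun x => by
            rw [ContinuousMap.smul_apply, smul_eq_mul, mul_assoc]
          simp_rw [e]
          rw [integral_const_mul, ih1, mul_zero]
      have hA : A ⊆ {g : C(G, ℂ) | ∫ x, g x * χ x ∂μ = 0} :=
        closure_minimal hsub (isClosed_eq (hcont χ) continuous_const)
      exact hA hfA
    -- conjugate orthogonality
    have horto' : ∀ χ ∈ S, χ ≠ 1 → ∫ x, f x * (starRingEnd ℂ) (χ x) ∂μ = 0 := by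
      intro χ hχ hne
      have hfr : ∀ x, (starRingEnd ℂ) (f x) = f x := fun x =>
        Complex.conj_eq_iff_im.2 (hfim x)
      have e : (fun x => f x * (starRingEnd ℂ) (χ x)) =
          fun x => (starRingEnd ℂ) ((starRingEnd ℂ) (f x) * χ x) := by
        funext x; rw [map_mul, Complex.conj_conj]
      rw [e, integral_conj]
      simp_rw [hfr]
      rw [horto χ hχ hne, map_zero]
    have hμ0 : (μ Set.univ).toReal ≠ 0 := by
      have h0 : μ Set.univ ≠ 0 := (isOpen_univ.measure_pos μ Set.univ_nonempty).ne'
      exact ENNReal.toReal_ne_zero.2 ⟨h0, measure_ne_top μ _⟩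
    have hc0 : ((μ Set.univ).toReal : ℂ) ≠ 0 := Complex.ofReal_ne_zero.2 hμ0
    obtain ⟨k, hkdef⟩ : ∃ k : ℂ, k = (∫ x, f x ∂μ) / ((μ Set.univ).toReal : ℂ) :=
      ⟨_, rfl⟩
    obtain ⟨h, hhx⟩ : ∃ h : C(G, ℂ), ∀ x, h x = f x - k :=
      ⟨f - k • (1 : C(G, ℂ)), fun x => by simp⟩
    have hint_h0 : ∫ x, h x ∂μ = 0 := by
      simp_rw [hhx]
      rw [integral_sub (hint _ (map_continuous f)) (integrable_const k),
        integral_const, measureReal_def, Complex.real_smul, hkdef]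
      field_simp
      simp
    have hU : A ⊆ {g : C(G, ℂ) | ∫ x, h x * (starRingEnd ℂ) (g x) ∂μ = 0} := by
      have hcont2 : Continuous fun g : C(G, ℂ) =>
          ∫ x, h x * (starRingEnd ℂ) (g x) ∂μ := by
        have h1 := (hcont h).comp (continuous_star : Continuous (star : C(G, ℂ) → C(G, ℂ)))
        have he : (fun g : C(G, ℂ) => ∫ x, h x * (starRingEnd ℂ) (g x) ∂μ) =
            (fun g : C(G, ℂ) => ∫ x, g x * h x ∂μ) ∘ star := by
          funext g
          simp only [Function.comp_apply]
          congr 1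
          funext x
          rw [ContinuousMap.star_apply, RCLike.star_def, mul_comm]
        rw [he]; exact h1
      apply closure_minimal ?_ (isClosed_eq hcont2 continuous_const)
      intro g hg
      induction hg using Submodule.span_induction with
      | mem ψ hψ =>
        rcases eq_or_ne ψ 1 with rfl | hψne
        · show ∫ x, h x * (starRingEnd ℂ) ((1 : C(G, ℂ)) x) ∂μ = 0
          have e : ∀ x, h x * (starRingEnd ℂ) ((1 : C(G, ℂ)) x) = h x := fun x => by
            rw [ContinuousMap.one_apply, map_one, mul_one]
          simp_rw [e]
          exact hint_h0
        · show ∫ x, h x * (starRingEnd ℂ) (ψ x) ∂μ = 0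
          have I1 := hint2 _ _ (map_continuous f) (hconj ψ)
          have I2 : Integrable (fun x => k * (starRingEnd ℂ) (ψ x)) μ :=
            (hint _ (hconj ψ)).const_mul k
          have e : ∀ x, h x * (starRingEnd ℂ) (ψ x)
              = f x * (starRingEnd ℂ) (ψ x) - k * (starRingEnd ℂ) (ψ x) := fun x => by
            rw [hhx x, sub_mul]
          simp_rw [e]
          rw [integral_sub I1 I2, horto' ψ hψ hψne, integral_const_mul,
            hvanish' ψ hψ hψne, mul_zero, sub_zero]
      | zero =>
        show ∫ x, h x * (starRingEnd ℂ) ((0 : C(G, ℂ)) x) ∂μ = 0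
        simp
      | add g g' hg hg' ihg ihg' =>
        have Ig := hint2 _ _ (map_continuous h) (hconj g)
        have Ig' := hint2 _ _ (map_continuous h) (hconj g')
        have ih1 : ∫ x, h x * (starRingEnd ℂ) (g x) ∂μ = 0 := ihg
        have ih2 : ∫ x, h x * (starRingEnd ℂ) (g' x) ∂μ = 0 := ihg'
        show ∫ x, h x * (starRingEnd ℂ) ((g + g') x) ∂μ = 0
        have e : ∀ x, h x * (starRingEnd ℂ) ((g + g') x)
            = h x * (starRingEnd ℂ) (g x) + h x * (starRingEnd ℂ) (g' x) := fun x => by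
          rw [ContinuousMap.add_apply, map_add, mul_add]
        simp_rw [e]
        rw [integral_add Ig Ig', ih1, ih2, add_zero]
      | smul a g hg ih =>
        have ih1 : ∫ x, h x * (starRingEnd ℂ) (g x) ∂μ = 0 := ih
        show ∫ x, h x * (starRingEnd ℂ) ((a • g) x) ∂μ = 0
        have e : ∀ x, h x * (starRingEnd ℂ) ((a • g) x)
            = (starRingEnd ℂ) a * (h x * (starRingEnd ℂ) (g x)) := fun x => by
          rw [ContinuousMap.smul_apply, smul_eq_mul, map_mul]; ring
        simp_rw [e]
        rw [integral_const_mul, ih1, mul_zero]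
    have hf0 : ∫ x, h x * (starRingEnd ℂ) (f x) ∂μ = 0 := hU hfA
    have hk0 : ∫ x, h x * (starRingEnd ℂ) k ∂μ = 0 := by
      rw [integral_mul_const, hint_h0, zero_mul]
    have hhh : ∫ x, h x * (starRingEnd ℂ) (h x) ∂μ = 0 := by
      have e : ∀ x, h x * (starRingEnd ℂ) (h x)
          = h x * (starRingEnd ℂ) (f x) - h x * (starRingEnd ℂ) k := by
        intro x
        rw [hhx x, map_sub]
        ring
      simp_rw [e]
      have I1 := hint2 _ _ (map_continuous h) (hconj f)
      have I2 : Integrable (fun x => h x * (starRingEnd ℂ) k) μ :=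
        (hint _ (map_continuous h)).mul_const _
      rw [integral_sub I1 I2, hf0, hk0, sub_zero]
    have hns : ∫ x, Complex.normSq (h x) ∂μ = 0 := by
      have I := hint2 _ _ (map_continuous h) (hconj h)
      have h3 := integral_re I
      rw [hhh] at h3
      have h2 : ∀ x, RCLike.re (h x * (starRingEnd ℂ) (h x)) = Complex.normSq (h x) := by
        intro x
        rw [RCLike.re_to_complex, Complex.mul_conj, Complex.ofReal_re]
      simp_rw [h2] at h3
      simpa using h3
    have hnn : ∀ x, h x = 0 := by
      have hcontns : Continuous fun x => Complex.normSq (h x) :=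
        Complex.continuous_normSq.comp (map_continuous h)
      have hae := (integral_eq_zero_iff_of_nonneg
        (fun x => Complex.normSq_nonneg _) (hint0 _ hcontns)).1 hns
      have heq := (Continuous.ae_eq_iff_eq μ hcontns continuous_const).1 hae
      intro x
      exact Complex.normSq_eq_zero.1 (congrFun heq x)
    intro x y
    have hx0 : f x = k := sub_eq_zero.1 (by rw [← hhx x]; exact hnn x)
    have hy0 : f y = k := sub_eq_zero.1 (by rw [← hhx y]; exact hnn y)
    rw [hx0, hy0]
  · -- converse direction
    rintro ⟨χ, hχ, hne, hstar⟩
    refine ⟨χ + star χ, subset_closure (Submodule.add_mem _ (Submodule.subset_span hχ)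
      (Submodule.subset_span hstar)), fun x => by simp, ?_⟩
    obtain ⟨x, hx⟩ : ∃ x, χ x ≠ 1 := by
      by_contra hc
      push_neg at hc
      exact hne (ContinuousMap.ext fun x => by simpa using hc x)
    refine ⟨x, 1, fun hcontra => ?_⟩
    have hχ1 : χ 1 = 1 := by
      have h2 := (hchar χ hχ).2 1 1
      rw [mul_one] at h2
      have hnz : χ (1 : G) ≠ 0 := by
        intro h0
        have := (hchar χ hχ).1 1
        rw [h0] at this; simp at this
      exact mul_left_cancel₀ hnz (by rw [← h2, mul_one])
    have hval : χ x + (starRingEnd ℂ) (χ x) = 2 := by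
      have h2 : χ x + (starRingEnd ℂ) (χ x) = 1 + 1 := by simpa [hχ1] using hcontra
      rw [h2]; norm_num
    rw [Complex.add_conj] at hval
    have hre : (χ x).re = 1 := by
      have := congrArg Complex.re hval
      simpa using this
    have hnorm : ‖χ x‖ = 1 := (hchar χ hχ).1 x
    apply hx
    have him : (χ x).im = 0 := by
      have hsq : Complex.normSq (χ x) = 1 := by
        rw [Complex.normSq_eq_norm_sq, hnorm]; norm_num
      rw [Complex.normSq_apply] at hsq
      nlinarith [hsq, hre]
    exact Complex.ext (by simp [hre]) (by simp [him])
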